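/- arXiv:1108.3598 — 3 statements merged into one kernel-verified Lean document; each statement's English description precedes it below -/
import Mathlib

section
/- Let E be a real normed vector space, let f : E → ℝ be twice continuously differentiable near a point x with f(x) < 0, let 0 < δ ≤ 1, and set g := fun y ↦ −(−f(y))^δ. Assume the second Fréchet derivative D²g(x) is positive semidefinite, i.e., D²g(x)(w, w) ≥ 0 for all w ∈ E. Then for every u ∈ E with Df(x)u = 0 and every w ∈ E: δ·(−f(x))^{δ−1}·|D²f(x)(u, w)| ≤ (D²g(x)(u, u))^{1/2} · (D²g(x)(w, w))^{1/2}. (This is the functional form of estimate (3.4): the Levi form of r_δ applied to a tangential vector u is controlled, with a gain, by the Levi form of −(−r_δ)^δ.) -/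
/-- Functional form of estimate (3.4): let `f : E → ℝ` be `C²`
near `x` with `f x < 0`, `0 < δ ≤ 1`, `g := fun y ↦ -(-f y) ^ δ`, and assume the
second Fréchet derivative of `g` at `x` is positive semidefinite. Then for every
`u` with `Df(x)u = 0` and every `w`,
`δ (-f x)^(δ-1) |D²f(x)(u,w)| ≤ (D²g(x)(u,u))^{1/2} (D²g(x)(w,w))^{1/2}`. -/
theorem stmt_3 {E : Type*} [NormedAddCommGroup E] [NormedSpace ℝ E]
    (f : E → ℝ) (x : E) (hf : ContDiffAt ℝ 2 f x) (hx : f x < 0)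
    (δ : ℝ) (hδ0 : 0 < δ) (hδ1 : δ ≤ 1)
    (g : E → ℝ) (hg : g = fun y => -(-f y) ^ δ)
    (hpsd : ∀ w : E, 0 ≤ iteratedFDeriv ℝ 2 g x ![w, w]) :
    ∀ u : E, fderiv ℝ f x u = 0 →
      ∀ w : E,
        δ * (-f x) ^ (δ - 1) * |iteratedFDeriv ℝ 2 f x ![u, w]| ≤
          Real.sqrt (iteratedFDeriv ℝ 2 g x ![u, u]) *
            Real.sqrt (iteratedFDeriv ℝ 2 g x ![w, w]) := by
  intro u hu w
  have hfx : (0:ℝ) < -f x := by linarith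
  -- eventually f y < 0 and f differentiable at y
  have hneg : ∀ᶠ y in nhds x, f y < 0 :=
    hf.continuousAt.eventually_lt continuousAt_const hx
  have hdiff : ∀ᶠ y in nhds x, DifferentiableAt ℝ f y :=
    (hf.eventually (by norm_num)).mono fun y hy => hy.differentiableAt (by norm_num)
  -- derivative of g near x
  have hg' : ∀ᶠ y in nhds x,
      HasFDerivAt g ((δ * (-f y) ^ (δ - 1)) • fderiv ℝ f y) y := by
    filter_upwards [hneg, hdiff] with y hy1 hy2
    have h0 : -f y ≠ 0 := by intro h; simp at h; linarith
    have h1 : HasDerivAt (fun s : ℝ => s ^ δ) (δ * (-f y) ^ (δ - 1)) (-f y) :=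
      Real.hasDerivAt_rpow_const (Or.inl h0)
    have h2 : HasDerivAt (fun t : ℝ => (-t) ^ δ) (δ * (-f y) ^ (δ - 1) * (-1)) (f y) :=
      h1.comp (f y) (hasDerivAt_neg (f y))
    have h3 : HasDerivAt (fun t : ℝ => -(-t) ^ δ) (δ * (-f y) ^ (δ - 1)) (f y) := by
      simpa [Pi.neg_def] using h2.neg
    have := h3.comp_hasFDerivAt y hy2.hasFDerivAt
    simpa [hg, Function.comp_def] using this
  have hgev : fderiv ℝ g =ᶠ[nhds x]
      fun y => (δ * (-f y) ^ (δ - 1)) • fderiv ℝ f y :=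
    hg'.mono fun y hy => hy.fderiv
  -- differentiate the coefficient c y = δ * (-f y)^(δ-1)
  have hdx : DifferentiableAt ℝ f x := hf.differentiableAt (by norm_num)
  have hc' : HasFDerivAt (fun y => δ * (-f y) ^ (δ - 1))
      ((-(δ * ((δ - 1) * (-f x) ^ (δ - 1 - 1)))) • fderiv ℝ f x) x := by
    have h0 : -f x ≠ 0 := ne_of_gt hfx
    have h1 : HasDerivAt (fun s : ℝ => s ^ (δ - 1)) ((δ - 1) * (-f x) ^ (δ - 1 - 1)) (-f x) :=
      Real.hasDerivAt_rpow_const (Or.inl h0)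
    have h2 : HasDerivAt (fun t : ℝ => δ * (-t) ^ (δ - 1))
        (-(δ * ((δ - 1) * (-f x) ^ (δ - 1 - 1)))) (f x) := by
      simpa [mul_comm, mul_assoc] using ((h1.comp (f x) (hasDerivAt_neg (f x))).const_mul δ)
    exact h2.comp_hasFDerivAt x hdx.hasFDerivAt
  -- fderiv f is differentiable at x
  have hL : HasFDerivAt (fderiv ℝ f) (fderiv ℝ (fderiv ℝ f) x) x :=
    ((hf.fderiv_right (m := 1) (by norm_num)).differentiableAt (by norm_num)).hasFDerivAt
  have hF : HasFDerivAt (fun y => (δ * (-f y) ^ (δ - 1)) • fderiv ℝ f y)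
      ((δ * (-f x) ^ (δ - 1)) • fderiv ℝ (fderiv ℝ f) x +
        ((-(δ * ((δ - 1) * (-f x) ^ (δ - 1 - 1)))) • fderiv ℝ f x).smulRight (fderiv ℝ f x)) x :=
    hc'.smul hL
  have hgg : fderiv ℝ (fderiv ℝ g) x =
      (δ * (-f x) ^ (δ - 1)) • fderiv ℝ (fderiv ℝ f) x +
        ((-(δ * ((δ - 1) * (-f x) ^ (δ - 1 - 1)))) • fderiv ℝ f x).smulRight (fderiv ℝ f x) := by
    rw [Filter.EventuallyEq.fderiv_eq hgev]
    exact hF.fderiv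
  set c : ℝ := δ * (-f x) ^ (δ - 1) with hcdef
  have hcpos : 0 < c := by positivity
  set Bf : E → E → ℝ := fun v w => fderiv ℝ (fderiv ℝ f) x v w with hBf
  set Bg : E → E → ℝ := fun v w => fderiv ℝ (fderiv ℝ g) x v w with hBg
  have hBgf : ∀ v z : E, Bg v z = c * Bf v z +
      (-(δ * ((δ - 1) * (-f x) ^ (δ - 1 - 1)))) * (fderiv ℝ f x v) * (fderiv ℝ f x z) := by
    intro v z
    simp only [hBg, hBf, hgg, ContinuousLinearMap.add_apply,
      ContinuousLinearMap.smul_apply, ContinuousLinearMap.smulRight_apply, smul_eq_mul]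
    try ring
  have hsym : ∀ v z : E, Bf v z = Bf z v := fun v z =>
    (hf.isSymmSndFDerivAt (by norm_num)) v z
  have huw : Bg u w = c * Bf u w := by rw [hBgf, hu]; ring
  have hwu : Bg w u = Bg u w := by rw [hBgf, hBgf, hu, hsym u w]; ring
  -- rewrite iteratedFDeriv as Bg / Bf
  have hiter : ∀ (h : E → ℝ) (v z : E), iteratedFDeriv ℝ 2 h x ![v, z] =
      fderiv ℝ (fderiv ℝ h) x v z := by
    intro h v z
    rw [iteratedFDeriv_two_apply]
    simp
  -- positive semidefiniteness in Bg form
  have hpsd' : ∀ v : E, 0 ≤ Bg v v := fun v => by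
    have := hpsd v; rwa [hiter] at this
  -- Cauchy-Schwarz
  have key : (Bg u w) ^ 2 ≤ Bg u u * Bg w w := by
    have hquad : ∀ t : ℝ, 0 ≤ Bg w w * (t * t) + (2 * Bg u w) * t + Bg u u := by
      intro t
      have := hpsd' (u + t • w)
      have hexp : Bg (u + t • w) (u + t • w) =
          Bg w w * (t * t) + (2 * Bg u w) * t + Bg u u := by
        simp only [hBg, map_add, map_smul, ContinuousLinearMap.add_apply,
          ContinuousLinearMap.smul_apply, smul_eq_mul]
        have := hwu
        simp only [hBg] at this
        rw [this]; ring
      linarith [hexp ▸ this]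
    have hd := discrim_le_zero hquad
    rw [discrim] at hd
    nlinarith [hd]
  have habs : |Bg u w| ≤ Real.sqrt (Bg u u) * Real.sqrt (Bg w w) := by
    rw [← Real.sqrt_sq_eq_abs, ← Real.sqrt_mul (hpsd' u)]
    exact Real.sqrt_le_sqrt key
  calc δ * (-f x) ^ (δ - 1) * |iteratedFDeriv ℝ 2 f x ![u, w]|
      = |Bg u w| := by
        rw [hiter, huw, abs_mul, abs_of_pos hcpos, hcdef]
    _ ≤ Real.sqrt (Bg u u) * Real.sqrt (Bg w w) := habs
    _ = _ := by rw [hiter g u u, hiter g w w]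
end

section
/- Let n ≥ 1, let H be an n×n complex Hermitian matrix, let v ∈ ℂⁿ with ‖v‖ = 1, let ρ > 0, 0 < δ ≤ 1, and let K ≥ 0 with ⟨Hv, v⟩ ≤ K. Define P := δ·ρ^{δ−1}·H + δ·(1−δ)·ρ^{δ−2}·(v vᴴ) and assume P is positive semidefinite. Then for every u ∈ ℂⁿ with ⟨u, v⟩ = 0 one has |⟨Hu, v⟩| ≤ δ^{−1/2}·ρ^{−δ/2}·(K·ρ + (1−δ))^{1/2} · ⟨Pu, u⟩^{1/2}. (This is estimate (3.4) with the explicit constant: the Levi form of r_δ against the normal direction is bounded by (1−δ)^{1/2}(−r_δ)^{−δ/2} times the square root of the Levi form of −(−r_δ)^δ, up to a term O((−r_δ)^{(1−δ)/2}).) -/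
open Matrix
open scoped ComplexOrder


/-- The Hermitian pairing `⟨A u, v⟩` on `ℂⁿ = EuclideanSpace ℂ (Fin n)`,
where `A` acts by matrix-vector multiplication. -/
noncomputable def matInner {n : ℕ} (A : Matrix (Fin n) (Fin n) ℂ)
    (u v : EuclideanSpace ℂ (Fin n)) : ℂ :=
  inner ℂ ((WithLp.equiv 2 (Fin n → ℂ)).symm (A.mulVec ((WithLp.equiv 2 (Fin n → ℂ)) u))) v

/-- The rank-one outer product matrix `v vᴴ`, with entries `v i * conj (v j)`. -/
noncomputable def outer {n : ℕ} (v : EuclideanSpace ℂ (Fin n)) :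
    Matrix (Fin n) (Fin n) ℂ :=
  Matrix.vecMulVec ((WithLp.equiv 2 (Fin n → ℂ)) v) (star ((WithLp.equiv 2 (Fin n → ℂ)) v))

lemma matInner_eq {n : ℕ} (A : Matrix (Fin n) (Fin n) ℂ) (u v : EuclideanSpace ℂ (Fin n)) :
    matInner A u v = dotProduct (star ((WithLp.equiv 2 (Fin n → ℂ)) u))
      (Aᴴ *ᵥ ((WithLp.equiv 2 (Fin n → ℂ)) v)) := by
  rw [matInner, EuclideanSpace.inner_eq_star_dotProduct]
  simp [star_mulVec, dotProduct_mulVec]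
  exact dotProduct_comm _ _

lemma vecMulVec_mulVec' {n : ℕ} (a b x : Fin n → ℂ) :
    vecMulVec a b *ᵥ x = (b ⬝ᵥ x) • a := by
  ext i
  simp [vecMulVec, mulVec, dotProduct, Finset.mul_sum, mul_comm, mul_left_comm]

lemma outer_herm {n : ℕ} (v : EuclideanSpace ℂ (Fin n)) : (outer v)ᴴ = outer v := by
  ext i j
  simp [outer, vecMulVec, conjTranspose_apply, mul_comm]

lemma matInner_lin {n : ℕ} (A B : Matrix (Fin n) (Fin n) ℂ) (c d : ℝ)
    (u v : EuclideanSpace ℂ (Fin n)) :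
    matInner (((c:ℂ)) • A + ((d:ℂ)) • B) u v = c * matInner A u v + d * matInner B u v := by
  simp [matInner_eq, conjTranspose_add, conjTranspose_smul, add_mulVec, smul_mulVec,
    dotProduct_add, dotProduct_smul, smul_eq_mul]

/-- Estimate (3.4) with explicit constant: let `H` be Hermitian,
`‖v‖ = 1`, `ρ > 0`, `0 < δ ≤ 1`, `K ≥ 0` with `⟨Hv, v⟩ ≤ K`, and set
`P := δ ρ^(δ-1) • H + δ(1-δ) ρ^(δ-2) • (v vᴴ)`. If `P` is positive semidefinite,
then for every `u` with `⟨u, v⟩ = 0`,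
`|⟨Hu, v⟩| ≤ δ^{-1/2} ρ^{-δ/2} (Kρ + (1-δ))^{1/2} ⟨Pu,u⟩^{1/2}`. -/
theorem stmt_5 (n : ℕ) (hn : 1 ≤ n) (H : Matrix (Fin n) (Fin n) ℂ)
    (hH : H.IsHermitian) (v : EuclideanSpace ℂ (Fin n)) (hv : ‖v‖ = 1)
    (ρ : ℝ) (hρ : 0 < ρ) (δ : ℝ) (hδ0 : 0 < δ) (hδ1 : δ ≤ 1)
    (K : ℝ) (hK : 0 ≤ K) (hHv : (matInner H v v).re ≤ K)
    (P : Matrix (Fin n) (Fin n) ℂ)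
    (hP : P = ((δ * ρ ^ (δ - 1) : ℝ) : ℂ) • H +
      ((δ * (1 - δ) * ρ ^ (δ - 2) : ℝ) : ℂ) • outer v)
    (hpsd : ∀ u : EuclideanSpace ℂ (Fin n), 0 ≤ (matInner P u u).re) :
    ∀ u : EuclideanSpace ℂ (Fin n), inner ℂ u v = (0 : ℂ) →
      ‖matInner H u v‖ ≤
        δ ^ (-(1 : ℝ) / 2) * ρ ^ (-δ / 2) * Real.sqrt (K * ρ + (1 - δ)) *
          Real.sqrt ((matInner P u u).re) := by
  intro u hu
  have hPherm : Pᴴ = P := by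
    rw [hP]
    simp [conjTranspose_add, conjTranspose_smul, hH.eq, outer_herm]
  have hPsd : P.PosSemidef := by
    refine .of_dotProduct_mulVec_nonneg hPherm fun x => ?_
    set z := dotProduct (star x) (P *ᵥ x) with hz
    have hzstar : star z = z := by
      have h1 : star z = star x ⬝ᵥ (Pᴴ *ᵥ x) := by
        rw [hz, star_dotProduct, star_star, star_mulVec, dotProduct_mulVec]
      rw [h1, hPherm]
    have hre : 0 ≤ z.re := by
      have := hpsd ((WithLp.equiv 2 (Fin n → ℂ)).symm x)
      rwa [matInner_eq, Equiv.apply_symm_apply, hPherm] at this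
    rw [Complex.le_def]
    refine ⟨by simpa using hre, ?_⟩
    have := congrArg Complex.im hzstar
    simp only [Complex.star_def, Complex.conj_im] at this
    simp only [Complex.zero_im]
    linarith
  obtain ⟨B, hB⟩ : ∃ B : Matrix (Fin n) (Fin n) ℂ, P = Bᴴ * B := by
    open scoped MatrixOrder in
    obtain ⟨X, hX, -, hXX⟩ :=
      CFC.exists_sqrt_of_isSelfAdjoint_of_quasispectrumRestricts hPsd.isHermitian
        (QuasispectrumRestricts.nnreal_of_nonneg hPsd.nonneg)
    exact ⟨X, by rw [← hXX, ← star_eq_conjTranspose, hX.star_eq]⟩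
  set f : EuclideanSpace ℂ (Fin n) → EuclideanSpace ℂ (Fin n) :=
    fun x => (WithLp.equiv 2 (Fin n → ℂ)).symm (B *ᵥ ((WithLp.equiv 2 (Fin n → ℂ)) x)) with hf
  have key : ∀ x y : EuclideanSpace ℂ (Fin n), matInner P x y = inner ℂ (f x) (f y) := by
    intro x y
    rw [matInner_eq, hPherm, hB, hf]
    rw [EuclideanSpace.inner_eq_star_dotProduct]
    simp only [WithLp.equiv_symm_apply, WithLp.ofLp_toLp, WithLp.equiv_apply]
    rw [star_mulVec, ← Matrix.mulVec_mulVec,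
      dotProduct_mulVec]
    exact dotProduct_comm _ _
  -- positivity of constants
  have hc1 : (0:ℝ) < δ * ρ ^ (δ - 1) := by positivity
  have hδ1' : (0:ℝ) ≤ 1 - δ := by linarith
  have hc0 : (0:ℝ) ≤ K * ρ + (1 - δ) := by positivity
  -- outer v pairings
  have hdotvu : star ((WithLp.equiv 2 (Fin n → ℂ)) v) ⬝ᵥ ((WithLp.equiv 2 (Fin n → ℂ)) u) = 0 := by
    have h0 : star ((star ((WithLp.equiv 2 (Fin n → ℂ)) u)) ⬝ᵥ ((WithLp.equiv 2 (Fin n → ℂ)) v))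
        = 0 := by
      rw [star_eq_zero, dotProduct_comm]; exact hu
    rwa [star_dotProduct, star_star] at h0
  have houter_u : matInner (outer v) u v = 0 := by
    rw [matInner, outer, vecMulVec_mulVec', hdotvu]
    simp
  have hvv : star ((WithLp.equiv 2 (Fin n → ℂ)) v) ⬝ᵥ ((WithLp.equiv 2 (Fin n → ℂ)) v) = 1 := by
    rw [dotProduct_comm]; change inner ℂ v v = 1
    rw [@inner_self_eq_norm_sq_to_K ℂ]
    rw [hv]; norm_num
  have houter_v : matInner (outer v) v v = 1 := by
    rw [matInner, outer, vecMulVec_mulVec', hvv, one_smul]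
    rw [Equiv.symm_apply_apply]
    rw [@inner_self_eq_norm_sq_to_K ℂ, hv]; norm_num
  -- P pairings
  have hPuv : matInner P u v = ((δ * ρ ^ (δ - 1) : ℝ) : ℂ) * matInner H u v := by
    rw [hP, matInner_lin, houter_u, mul_zero, add_zero]
  have hPvv : (matInner P v v).re ≤ δ * ρ ^ (δ - 2) * (K * ρ + (1 - δ)) := by
    rw [hP, matInner_lin, houter_v, mul_one]
    rw [Complex.add_re, Complex.re_ofReal_mul, Complex.ofReal_re]
    have hq : (0:ℝ) < ρ ^ (δ - 2) := by positivity
    have hrw : ρ ^ (δ - 1) = ρ ^ (δ - 2) * ρ := by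
      rw [show δ - 1 = (δ - 2) + 1 by ring, Real.rpow_add_one hρ.ne']
    rw [hrw]
    nlinarith [mul_le_mul_of_nonneg_left hHv (by positivity : (0:ℝ) ≤ δ * (ρ ^ (δ - 2) * ρ))]
  -- Cauchy–Schwarz
  have hnorm : ∀ x : EuclideanSpace ℂ (Fin n), ‖f x‖ = Real.sqrt ((matInner P x x).re) := by
    intro x
    have h : matInner P x x = ((‖f x‖ : ℝ) : ℂ) ^ 2 := by
      rw [key]; exact inner_self_eq_norm_sq_to_K _
    rw [h, ← Complex.ofReal_pow, Complex.ofReal_re, Real.sqrt_sq (norm_nonneg _)]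
  have hcs : ‖matInner P u v‖ ≤
      Real.sqrt ((matInner P u u).re) * Real.sqrt ((matInner P v v).re) := by
    rw [key u v, ← hnorm u, ← hnorm v]
    exact norm_inner_le_norm _ _
  -- rpow algebra
  have h1 : Real.sqrt (δ * ρ ^ (δ - 2) * (K * ρ + (1 - δ)))
      = Real.sqrt δ * ρ ^ ((δ - 2) / 2) * Real.sqrt (K * ρ + (1 - δ)) := by
    have e3 : Real.sqrt (ρ ^ (δ - 2)) = ρ ^ ((δ - 2) / 2) := by
      rw [Real.sqrt_eq_rpow, ← Real.rpow_mul hρ.le]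
      congr 1; ring
    rw [Real.sqrt_mul (by positivity), Real.sqrt_mul hδ0.le, e3]
  have h2 : δ * ρ ^ (δ - 1) * (δ ^ (-(1:ℝ) / 2) * ρ ^ (-δ / 2))
      = Real.sqrt δ * ρ ^ ((δ - 2) / 2) := by
    have e1 : δ * δ ^ (-(1:ℝ) / 2) = Real.sqrt δ := by
      rw [Real.sqrt_eq_rpow]
      nth_rewrite 1 [← Real.rpow_one δ]
      rw [← Real.rpow_add hδ0]
      norm_num
    have e2 : ρ ^ (δ - 1) * ρ ^ (-δ / 2) = ρ ^ ((δ - 2) / 2) := by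
      rw [← Real.rpow_add hρ]
      congr 1; ring
    calc δ * ρ ^ (δ - 1) * (δ ^ (-(1:ℝ) / 2) * ρ ^ (-δ / 2))
        = (δ * δ ^ (-(1:ℝ) / 2)) * (ρ ^ (δ - 1) * ρ ^ (-δ / 2)) := by ring
      _ = Real.sqrt δ * ρ ^ ((δ - 2) / 2) := by rw [e1, e2]
  -- final chain
  rw [← mul_le_mul_iff_right₀ hc1]
  have hnormP : δ * ρ ^ (δ - 1) * ‖matInner H u v‖ = ‖matInner P u v‖ := by
    rw [hPuv, norm_mul, Complex.norm_real, Real.norm_eq_abs, abs_of_pos hc1]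
  calc δ * ρ ^ (δ - 1) * ‖matInner H u v‖
      = ‖matInner P u v‖ := hnormP
    _ ≤ Real.sqrt ((matInner P u u).re) * Real.sqrt ((matInner P v v).re) := hcs
    _ ≤ Real.sqrt ((matInner P u u).re)
        * Real.sqrt (δ * ρ ^ (δ - 2) * (K * ρ + (1 - δ))) := by
        exact mul_le_mul_of_nonneg_left (Real.sqrt_le_sqrt hPvv) (Real.sqrt_nonneg _)
    _ = δ * ρ ^ (δ - 1) * (δ ^ (-(1:ℝ) / 2) * ρ ^ (-δ / 2) * Real.sqrt (K * ρ + (1 - δ))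
        * Real.sqrt ((matInner P u u).re)) := by
        rw [h1, ← h2]; ring
end

section
/- Let E be a real normed vector space, let f : E → ℝ be twice continuously differentiable near a point x, let ρ > 0 with f(x) + ρ < 0, and let 0 < δ ≤ 1. If the second Fréchet derivative of y ↦ −(−f(y))^δ at x is positive semidefinite, then the second Fréchet derivative of y ↦ −(−f(y)−ρ)^δ at x is also positive semidefinite. (Functional form of the exhaustion step in the proof of Theorem 3.1: if −(−r_δ)^δ is plurisubharmonic at a point of the subdomain D_ρ = {r_δ + ρ < 0}, then so is −(−r_δ−ρ)^δ.) -/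
open Real Filter Topology

lemma aux_second {E : Type*} [NormedAddCommGroup E] [NormedSpace ℝ E]
    (f : E → ℝ) (x : E) (hf : ContDiffAt ℝ 2 f x) (δ : ℝ) (hfx : f x < 0) (w : E) :
    iteratedFDeriv ℝ 2 (fun y => -(-f y) ^ δ) x ![w, w]
      = δ * (1 - δ) * (-f x) ^ (δ - 2) * (fderiv ℝ f x w) ^ 2
        + δ * (-f x) ^ (δ - 1) * (fderiv ℝ (fderiv ℝ f) x w w) := by
  have h1 : ∀ᶠ y in 𝓝 x, fderiv ℝ (fun z => -(-f z) ^ δ) y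
      = (δ * (-f y) ^ (δ - 1)) • fderiv ℝ f y := by
    have hev : ∀ᶠ y in 𝓝 x, ContDiffAt ℝ 2 f y := hf.eventually (by norm_num)
    have hlt : ∀ᶠ y in 𝓝 x, f y < 0 :=
      (hf.continuousAt.eventually_lt continuousAt_const hfx)
    filter_upwards [hev, hlt] with y hy hylt
    have hd : HasFDerivAt f (fderiv ℝ f y) y :=
      (hy.differentiableAt (by norm_num)).hasFDerivAt
    have hneg : HasFDerivAt (fun z => -f z) (-fderiv ℝ f y) y := hd.neg
    have hpow : HasFDerivAt (fun z => (-f z) ^ δ)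
        ((δ * (-f y) ^ (δ - 1)) • (-fderiv ℝ f y)) y :=
      hneg.rpow_const (Or.inl (ne_of_gt (by linarith)))
    have := hpow.neg
    have heq : -((δ * (-f y) ^ (δ - 1)) • (-fderiv ℝ f y))
        = (δ * (-f y) ^ (δ - 1)) • fderiv ℝ f y := by
      rw [smul_neg, neg_neg]
    rw [heq] at this
    exact this.fderiv
  rw [iteratedFDeriv_two_apply, Filter.EventuallyEq.fderiv_eq h1]
  have hd : HasFDerivAt f (fderiv ℝ f x) x :=
    (hf.differentiableAt (by norm_num)).hasFDerivAt
  have hc : HasFDerivAt (fun y => δ * (-f y) ^ (δ - 1))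
      (δ • (((δ - 1) * (-f x) ^ (δ - 1 - 1)) • (-fderiv ℝ f x))) x :=
    ((hd.neg.rpow_const (Or.inl (ne_of_gt (by rw [Pi.neg_apply]; linarith)))).const_mul δ)
  have hL : HasFDerivAt (fderiv ℝ f) (fderiv ℝ (fderiv ℝ f) x) x :=
    ((hf.fderiv_right (m := 1) (by norm_num)).differentiableAt (by norm_num)).hasFDerivAt
  have : fderiv ℝ (fun y => (δ * (-f y) ^ (δ - 1)) • fderiv ℝ f y) x = _ := (hc.smul hL).fderiv
  rw [this]
  simp only [ContinuousLinearMap.add_apply, ContinuousLinearMap.smul_apply,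
    ContinuousLinearMap.smulRight_apply, ContinuousLinearMap.neg_apply,
    smul_eq_mul, smul_smul, Matrix.cons_val_zero, Matrix.cons_val_one, Matrix.head_cons]
  have : δ - 1 - 1 = δ - 2 := by ring
  rw [this]
  ring

/-- Exhaustion step of Theorem 3.1, functional form: let
`f : E → ℝ` be `C²` near `x`, `ρ > 0` with `f x + ρ < 0`, and `0 < δ ≤ 1`.
If the second Fréchet derivative of `y ↦ -(-f y) ^ δ` at `x` is positive
semidefinite, then so is the second Fréchet derivative of
`y ↦ -(-f y - ρ) ^ δ` at `x`. -/
theorem stmt_7 {E : Type*} [NormedAddCommGroup E] [NormedSpace ℝ E]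
    (f : E → ℝ) (x : E) (hf : ContDiffAt ℝ 2 f x)
    (ρ : ℝ) (hρ : 0 < ρ) (hx : f x + ρ < 0)
    (δ : ℝ) (hδ0 : 0 < δ) (hδ1 : δ ≤ 1)
    (hpsd : ∀ w : E, 0 ≤ iteratedFDeriv ℝ 2 (fun y => -(-f y) ^ δ) x ![w, w]) :
    ∀ w : E, 0 ≤ iteratedFDeriv ℝ 2 (fun y => -(-f y - ρ) ^ δ) x ![w, w] := by
  intro w
  have hfx : f x < 0 := by linarith
  have hfρ : ContDiffAt ℝ 2 (fun y => f y + ρ) x := hf.add contDiffAt_const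
  have e1 := aux_second f x hf δ hfx w
  have e2 := aux_second (fun y => f y + ρ) x hfρ δ hx w
  have hfd : fderiv ℝ (fun y => f y + ρ) = fderiv ℝ f := by
    funext y; exact fderiv_add_const ρ
  rw [hfd] at e2
  have hfun : (fun y => -(-(f y + ρ)) ^ δ) = (fun y => -(-f y - ρ) ^ δ) := by
    funext y; ring_nf
  rw [hfun] at e2
  have h0 := hpsd w
  rw [e1] at h0
  rw [e2]
  set a := -f x with ha
  set p := (fderiv ℝ f x w) ^ 2 with hp
  set H := fderiv ℝ (fderiv ℝ f) x w w with hH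
  have hap : 0 < a := by simp [ha]; linarith
  have hba : -(f x + ρ) = a - ρ := by rw [ha]; ring
  rw [hba]
  have hb : 0 < a - ρ := by simp [ha]; linarith
  have hp0 : 0 ≤ p := sq_nonneg _
  have expand : ∀ c : ℝ, 0 < c →
      δ * (1 - δ) * c ^ (δ - 2) * p + δ * c ^ (δ - 1) * H
        = δ * c ^ (δ - 1) * ((1 - δ) * p / c + H) := by
    intro c hc
    rw [show δ - 2 = (δ - 1) - 1 by ring, Real.rpow_sub_one (ne_of_gt hc)]
    field_simp
  rw [expand a hap] at h0
  rw [expand (a - ρ) hb]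
  have hpos1 : 0 < δ * a ^ (δ - 1) := mul_pos hδ0 (Real.rpow_pos_of_pos hap _)
  have hpos2 : 0 < δ * (a - ρ) ^ (δ - 1) := mul_pos hδ0 (Real.rpow_pos_of_pos hb _)
  have key : 0 ≤ (1 - δ) * p / a + H := (mul_nonneg_iff_of_pos_left hpos1).mp h0
  have hmono : (1 - δ) * p / a ≤ (1 - δ) * p / (a - ρ) := by
    exact div_le_div_of_nonneg_left (mul_nonneg (by linarith) hp0) hb (by linarith)
  exact mul_nonneg hpos2.le (by linarith)
end
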